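/- For the command C = 'loop X_4 { X_3 := X_1+X_2; choose {X_1 := X_3} or {X_2 := X_3} }', the outputs are not polynomially bounded: for every polynomial p there exist inputs x and a reachable output y with x ⟦C⟧ y and y_1 > p(x_1, x_2, x_3, x_4). Concretely, starting from x_1 = x_2 = 1, after 2k iterations a value of at least 2^k is reachable in X_1. -/

import Mathlib

/-- Expressions of the core language `L_r`. -/
inductive Expr (n : ℕ) where
  | zero : Expr n
  | var (i : Fin n) : Expr n
  | add (i j : Fin n) : Expr n
  | mul (i j : Fin n) : Expr n

/-- Commands of the core language `L_r`. -/
inductive Cmd (n : ℕ) where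
  | skip : Cmd n
  | assign (l : Fin n) (e : Expr n) : Cmd n
  | seq (c₁ c₂ : Cmd n) : Cmd n
  | choose (c₁ c₂ : Cmd n) : Cmd n
  | loop (l : Fin n) (c : Cmd n) : Cmd n

def Expr.eval {n : ℕ} : Expr n → (Fin n → ℕ) → ℕ
  | .zero, _ => 0
  | .var i, x => x i
  | .add i j, x => x i + x j
  | .mul i j, x => x i * x j

/-- `i`-fold iteration of a relation (`iterRel R 0` is the identity). -/
def iterRel {α : Type*} (R : α → α → Prop) : ℕ → α → α → Prop
  | 0, x, y => y = x
  | k + 1, x, z => ∃ y, R x y ∧ iterRel R k y z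

/-- The (nondeterministic, exact-assignment) semantics `⟦C⟧ ⊆ ℕⁿ × ℕⁿ`. -/
def Sem {n : ℕ} : Cmd n → (Fin n → ℕ) → (Fin n → ℕ) → Prop
  | .skip, x, y => y = x
  | .assign l e, x, y => y = Function.update x l (e.eval x)
  | .seq c₁ c₂, x, y => ∃ z, Sem c₁ x z ∧ Sem c₂ z y
  | .choose c₁ c₂, x, y => Sem c₁ x y ∨ Sem c₂ x y
  | .loop l c, x, y => ∃ i ≤ x l, iterRel (Sem c) i x y

/-- `loop X₄ { X₃ := X₁+X₂; choose {X₁ := X₃} or {X₂ := X₃} }`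
(variables `X₁,…,X₄` are indices `0,…,3`). -/
def expCmd : Cmd 4 :=
  Cmd.loop 3 (Cmd.seq (Cmd.assign 2 (Expr.add 0 1))
    (Cmd.choose (Cmd.assign 0 (Expr.var 2)) (Cmd.assign 1 (Expr.var 2))))


/-- The loop body of `expCmd`. -/
def expBody : Cmd 4 :=
  Cmd.seq (Cmd.assign 2 (Expr.add 0 1))
    (Cmd.choose (Cmd.assign 0 (Expr.var 2)) (Cmd.assign 1 (Expr.var 2)))

lemma step1 (a b c m : ℕ) : Sem expBody ![a,b,c,m] ![a+b,b,a+b,m] := by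
  refine ⟨![a,b,a+b,m], ?_, Or.inl ?_⟩ <;>
  · funext i; fin_cases i <;> simp [Expr.eval, Function.update]

lemma step2 (a b c m : ℕ) : Sem expBody ![a,b,c,m] ![a,a+b,a+b,m] := by
  refine ⟨![a,b,a+b,m], ?_, Or.inr ?_⟩ <;>
  · funext i; fin_cases i <;> simp [Expr.eval, Function.update]

lemma reach (k : ℕ) : ∀ a b c m : ℕ, ∃ a' b' c' : ℕ,
    iterRel (Sem expBody) (2 * k) ![a,b,c,m] ![a',b',c',m] ∧
    2 ^ k * min a b ≤ min a' b' := by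
  induction k with
  | zero => exact fun a b c m => ⟨a, b, c, by simp [iterRel]⟩
  | succ k ih =>
    intro a b c m
    obtain ⟨a', b', c', hiter, hmin⟩ := ih (a + (a+b)) (a+b) (a + (a+b)) m
    refine ⟨a', b', c', ?_, ?_⟩
    · have h2 : 2 * (k+1) = (2*k) + 1 + 1 := by ring
      rw [h2]
      exact ⟨![a, a+b, a+b, m], step2 a b c m,
        ![a + (a+b), a+b, a + (a+b), m], step1 a (a+b) (a+b) m, hiter⟩
    · refine le_trans ?_ hmin
      have hab : 2 * min a b ≤ min (a + (a+b)) (a+b) := by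
        have h1 : min a b ≤ a := min_le_left _ _
        have h2 : min a b ≤ b := min_le_right _ _
        have h3 : min (a + (a+b)) (a+b) = a+b := min_eq_right (by omega)
        omega
      calc 2 ^ (k+1) * min a b = 2 ^ k * (2 * min a b) := by ring
        _ ≤ 2 ^ k * min (a + (a+b)) (a+b) := Nat.mul_le_mul_left _ hab

lemma exists_lt_two_pow (C d : ℕ) : ∃ k : ℕ, C * (k + 1) ^ d < 2 ^ k := by
  have h := tendsto_pow_const_div_const_pow_of_one_lt d (by norm_num : (1:ℝ) < 2)
  have h2 : Filter.Tendsto (fun n : ℕ => ((n + 1 : ℕ) : ℝ) ^ d / 2 ^ (n + 1))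
      Filter.atTop (nhds 0) := h.comp (Filter.tendsto_add_atTop_nat 1)
  have h3 : ∀ᶠ n in Filter.atTop,
      ((n + 1 : ℕ) : ℝ) ^ d / 2 ^ (n + 1) < 1 / (2 * (C + 1)) :=
    h2.eventually (gt_mem_nhds (by positivity))
  obtain ⟨n, hn⟩ := h3.exists
  refine ⟨n, ?_⟩
  have hpos : (0:ℝ) < 2 ^ (n+1) := by positivity
  rw [div_lt_div_iff₀ hpos (by positivity), one_mul] at hn
  have hN : (n + 1) ^ d * (2 * (C + 1)) < 2 ^ (n + 1) := by exact_mod_cast hn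
  rw [pow_succ] at hN
  have h1 : 1 ≤ (n + 1) ^ d := Nat.one_le_pow _ _ (by omega)
  nlinarith [hN, h1]

lemma eval_bound (p : MvPolynomial (Fin 4) ℕ) : ∃ C d : ℕ, ∀ (x : Fin 4 → ℕ) (N : ℕ),
    (∀ i, x i ≤ N) → MvPolynomial.eval x p ≤ C * (N + 1) ^ d := by
  induction p using MvPolynomial.induction_on with
  | C a => exact ⟨a, 0, fun x N _ => by simp⟩
  | add p q hp hq =>
    obtain ⟨C1, d1, h1⟩ := hp
    obtain ⟨C2, d2, h2⟩ := hq
    refine ⟨C1 + C2, max d1 d2, fun x N hx => ?_⟩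
    rw [map_add]
    have e1 : (N+1) ^ d1 ≤ (N+1) ^ max d1 d2 :=
      Nat.pow_le_pow_right (Nat.succ_le_succ (Nat.zero_le N)) (le_max_left _ _)
    have e2 : (N+1) ^ d2 ≤ (N+1) ^ max d1 d2 :=
      Nat.pow_le_pow_right (Nat.succ_le_succ (Nat.zero_le N)) (le_max_right _ _)
    calc MvPolynomial.eval x p + MvPolynomial.eval x q
        ≤ C1 * (N+1) ^ max d1 d2 + C2 * (N+1) ^ max d1 d2 :=
          Nat.add_le_add ((h1 x N hx).trans (Nat.mul_le_mul_left _ e1))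
            ((h2 x N hx).trans (Nat.mul_le_mul_left _ e2))
      _ = (C1 + C2) * (N+1) ^ max d1 d2 := by ring
  | mul_X p i hp =>
    obtain ⟨C1, d1, h1⟩ := hp
    refine ⟨C1, d1 + 1, fun x N hx => ?_⟩
    rw [map_mul, MvPolynomial.eval_X]
    calc MvPolynomial.eval x p * x i ≤ (C1 * (N+1) ^ d1) * (N+1) :=
          Nat.mul_le_mul (h1 x N hx) ((hx i).trans (Nat.le_succ N))
      _ = C1 * (N+1) ^ (d1+1) := by ring

lemma key (k : ℕ) : ∃ y : Fin 4 → ℕ,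
    Sem expCmd ![1, 1, 0, 2 * k] y ∧ 2 ^ k ≤ y 0 := by
  obtain ⟨a', b', c', hiter, hmin⟩ := reach k 1 1 0 (2 * k)
  refine ⟨![a', b', c', 2 * k], ⟨2 * k, by simp, hiter⟩, ?_⟩
  simp only [min_self, mul_one] at hmin
  simpa using hmin.trans (min_le_left _ _)


/-- the outputs of `expCmd` are not polynomially bounded;
concretely, from `X₁ = X₂ = 1` and `X₄ = 2k`, a value `≥ 2^k` is reachable
in `X₁`. -/
theorem expCmd_not_poly_bounded :
    (∀ p : MvPolynomial (Fin 4) ℕ, ∃ x y : Fin 4 → ℕ,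
      Sem expCmd x y ∧ MvPolynomial.eval x p < y 0) ∧
    (∀ k : ℕ, ∃ y : Fin 4 → ℕ,
      Sem expCmd ![1, 1, 0, 2 * k] y ∧ 2 ^ k ≤ y 0) := by
  refine ⟨fun p => ?_, key⟩
  obtain ⟨C, d, hb⟩ := eval_bound p
  obtain ⟨k, hk⟩ := exists_lt_two_pow (C * 2 ^ d) d
  obtain ⟨y, hy, h2k⟩ := key k
  refine ⟨![1, 1, 0, 2 * k], y, hy, ?_⟩
  have hx : ∀ i, (![1, 1, 0, 2 * k] : Fin 4 → ℕ) i ≤ 2 * k + 1 := by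
    intro i; fin_cases i <;> simp
  calc MvPolynomial.eval ![1, 1, 0, 2 * k] p ≤ C * (2 * k + 1 + 1) ^ d :=
        hb _ _ hx
    _ = C * 2 ^ d * (k + 1) ^ d := by rw [show 2*k+1+1 = 2*(k+1) by ring, mul_pow]; ring
    _ < 2 ^ k := hk
    _ ≤ y 0 := h2k
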